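/- arXiv:1305.0838 — 2 statements merged into one kernel-verified Lean document; each statement's English description precedes it below -/
import Mathlib

section
/- Define R_z(G,o) = z·Z_{G−o}(z)/Z_G(z) for complex z. If Re(z) > 0 then z^{-1}·R_z(G,o) has strictly positive real part; in particular Z_G(z) ≠ 0 on the open right half-plane. -/
open Finset
open scoped Classical

/-- The set of matchings (dimeric configurations) of `G` using only vertices of `S`. -/
noncomputable def matchingsOn {V : Type*} (G : SimpleGraph V) (S : Finset V) :
    Finset (Finset (Sym2 V)) :=
  S.sym2.powerset.filter fun D =>
    (∀ e ∈ D, e ∈ G.edgeSet) ∧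
      (D : Set (Sym2 V)).Pairwise fun e f => ∀ v, v ∈ e → v ∉ f

/-- Monomer-dimer partition function with complex activity `z`. -/
noncomputable def Zc {V : Type*} (G : SimpleGraph V) (S : Finset V) (z : ℂ) : ℂ :=
  ∑ D ∈ matchingsOn G S, z ^ (S.card - 2 * D.card)

section Helpers
set_option linter.unusedSectionVars false

variable {V : Type*} [DecidableEq V] {G : SimpleGraph V} {S : Finset V} {D : Finset (Sym2 V)}

lemma mem_matchingsOn_iff :
    D ∈ matchingsOn G S ↔ (∀ e ∈ D, ∀ y ∈ e, y ∈ S) ∧ (∀ e ∈ D, e ∈ G.edgeSet) ∧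
      (D : Set (Sym2 V)).Pairwise fun e f => ∀ v, v ∈ e → v ∉ f := by
  simp only [matchingsOn, Finset.mem_filter, Finset.mem_powerset, and_assoc]
  constructor
  · rintro ⟨h1, h2, h3⟩
    exact ⟨fun e he y hy => Finset.mem_sym2_iff.mp (h1 he) y hy, h2, h3⟩
  · rintro ⟨h1, h2, h3⟩
    exact ⟨fun e he => Finset.mem_sym2_iff.mpr (h1 e he), h2, h3⟩

lemma mem_matchingsOn_erase {x : V} (h : D ∈ matchingsOn G S) (hx : ∀ e ∈ D, x ∉ e) :
    D ∈ matchingsOn G (S.erase x) := by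
  rw [mem_matchingsOn_iff] at h ⊢
  refine ⟨fun e he y hy => Finset.mem_erase.mpr ⟨?_, h.1 e he y hy⟩, h.2⟩
  rintro rfl; exact hx e he hy

lemma matchingsOn_card_bound (h : D ∈ matchingsOn G S) : 2 * D.card ≤ S.card := by
  classical
  induction D using Finset.induction_on generalizing S with
  | empty => simp
  | @insert e D heD ih =>
    rw [mem_matchingsOn_iff] at h
    obtain ⟨hsub, hedge, hpair⟩ := h
    induction e using Sym2.ind with
    | _ a b =>
    have hab : a ≠ b := ((SimpleGraph.mem_edgeSet G).mp (hedge _ (Finset.mem_insert_self _ _)) : G.Adj a b).ne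
    have haS : a ∈ S := hsub _ (Finset.mem_insert_self _ _) a (by simp)
    have hbS : b ∈ S := hsub _ (Finset.mem_insert_self _ _) b (by simp)
    have hD : D ∈ matchingsOn G ((S.erase a).erase b) := by
      have hDS : D ∈ matchingsOn G S := by
        rw [mem_matchingsOn_iff]
        exact ⟨fun e he => hsub e (Finset.mem_insert_of_mem he),
          fun e he => hedge e (Finset.mem_insert_of_mem he),
          hpair.mono (by simp [Set.subset_def]; tauto)⟩
      have key : ∀ f ∈ D, ∀ v, v ∈ (s(a,b) : Sym2 V) → v ∉ f := by
        intro f hf v hv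
        have hne : (s(a,b) : Sym2 V) ≠ f := by rintro rfl; exact heD hf
        exact hpair (by simp) (by simp [hf]) hne v hv
      refine mem_matchingsOn_erase (mem_matchingsOn_erase hDS ?_) ?_
      · intro f hf; exact key f hf a (by simp)
      · intro f hf; exact key f hf b (by simp)
    have := ih hD
    have h1 : ((S.erase a).erase b).card = S.card - 2 := by
      rw [Finset.card_erase_of_mem (Finset.mem_erase.mpr ⟨hab.symm, hbS⟩),
        Finset.card_erase_of_mem haS]
      omega
    have h2 : 2 ≤ S.card := by
      have := Finset.one_lt_card.mpr ⟨a, haS, b, hbS, hab⟩; omega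
    rw [Finset.card_insert_of_notMem heD]
    omega

lemma Zc_recursion (z : ℂ) {o : V} (ho : o ∈ S) :
    Zc G S z = z * Zc G (S.erase o) z +
      ∑ v ∈ (S.erase o).filter (G.Adj o), Zc G ((S.erase o).erase v) z := by
  classical
  have hcard : (S.erase o).card + 1 = S.card := Finset.card_erase_add_one ho
  rw [Zc]
  rw [← Finset.sum_filter_add_sum_filter_not (matchingsOn G S) (fun D => ∀ e ∈ D, o ∉ e)]
  congr 1
  · -- matchings avoiding o
    have hset : (matchingsOn G S).filter (fun D => ∀ e ∈ D, o ∉ e)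
        = matchingsOn G (S.erase o) := by
      ext D
      simp only [Finset.mem_filter]
      constructor
      · rintro ⟨hD, hav⟩; exact mem_matchingsOn_erase hD hav
      · intro hD
        rw [mem_matchingsOn_iff] at hD
        refine ⟨mem_matchingsOn_iff.mpr ⟨fun e he y hy =>
          Finset.mem_of_mem_erase (hD.1 e he y hy), hD.2⟩, ?_⟩
        intro e he hoe
        exact Finset.notMem_erase o S (hD.1 e he o hoe)
    rw [hset, Zc, Finset.mul_sum]
    refine Finset.sum_congr rfl fun D hD => ?_
    have hb : 2 * D.card ≤ (S.erase o).card := matchingsOn_card_bound hD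
    have : S.card - 2 * D.card = ((S.erase o).card - 2 * D.card) + 1 := by omega
    rw [this, pow_succ]
    ring
  · -- matchings containing an edge through o
    have key : ∀ (v : V) (D' : Finset (Sym2 V)), v ∈ (S.erase o).filter (G.Adj o) →
        D' ∈ matchingsOn G ((S.erase o).erase v) → (∀ e ∈ D', o ∉ e ∧ v ∉ e) := by
      intro v D' hv hD' e he
      rw [mem_matchingsOn_iff] at hD'
      constructor
      · intro hoe
        exact Finset.notMem_erase o S (Finset.mem_of_mem_erase (hD'.1 e he o hoe))
      · intro hve
        exact Finset.notMem_erase v _ (hD'.1 e he v hve)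
    rw [show (∑ v ∈ (S.erase o).filter (G.Adj o), Zc G ((S.erase o).erase v) z)
        = ∑ x ∈ ((S.erase o).filter (G.Adj o)).sigma
            (fun v => matchingsOn G ((S.erase o).erase v)),
          z ^ (((S.erase o).erase x.1).card - 2 * x.2.card) from
      Finset.sum_sigma' _ _ _]
    refine (Finset.sum_bij (fun x _ => insert s(o, x.1) x.2) ?_ ?_ ?_ ?_).symm
    · -- maps into target
      rintro ⟨v, D'⟩ hx
      rw [Finset.mem_sigma, Finset.mem_filter] at hx
      obtain ⟨⟨hvS, hadj⟩, hD'⟩ := hx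
      have hav := key v D' (Finset.mem_filter.mpr ⟨hvS, hadj⟩) hD'
      rw [Finset.mem_filter]
      constructor
      · rw [mem_matchingsOn_iff] at hD' ⊢
        refine ⟨?_, ?_, ?_⟩
        · intro e he y hy
          rcases Finset.mem_insert.mp he with rfl | he'
          · rcases Sym2.mem_iff.mp hy with rfl | rfl
            · exact ho
            · exact Finset.mem_of_mem_erase hvS
          · exact Finset.mem_of_mem_erase (Finset.mem_of_mem_erase (hD'.1 e he' y hy))
        · intro e he
          rcases Finset.mem_insert.mp he with rfl | he'
          · exact (SimpleGraph.mem_edgeSet G).mpr hadj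
          · exact hD'.2.1 e he'
        · rw [Finset.coe_insert]
          haveI : Std.Symm (fun e f : Sym2 V => ∀ v, v ∈ e → v ∉ f) :=
            ⟨fun e f h y hy hyf => h y hyf hy⟩
          refine Set.pairwise_insert_of_symm |>.mpr ⟨hD'.2.2, ?_⟩
          · intro f hf _ y hy
            rcases Sym2.mem_iff.mp hy with rfl | rfl
            · exact (hav f hf).1
            · exact (hav f hf).2
      · push_neg
        exact ⟨s(o, v), Finset.mem_insert_self _ _, Sym2.mem_mk_left o v⟩
    · -- injective
      rintro ⟨v₁, D₁⟩ h₁ ⟨v₂, D₂⟩ h₂ heq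
      rw [Finset.mem_sigma, Finset.mem_filter] at h₁ h₂
      have hav₁ := key v₁ D₁ (Finset.mem_filter.mpr h₁.1) h₁.2
      have hav₂ := key v₂ D₂ (Finset.mem_filter.mpr h₂.1) h₂.2
      have hne₁ : s(o, v₁) ∉ D₁ := fun h => (hav₁ _ h).1 (Sym2.mem_mk_left o v₁)
      have hne₂ : s(o, v₂) ∉ D₂ := fun h => (hav₂ _ h).1 (Sym2.mem_mk_left o v₂)
      have heq' : insert s(o, v₁) D₁ = insert s(o, v₂) D₂ := heq
      have hmem : s(o, v₁) ∈ insert s(o, v₂) D₂ := heq' ▸ Finset.mem_insert_self _ _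
      rcases Finset.mem_insert.mp hmem with he | he
      · have hv : v₁ = v₂ := Sym2.congr_right.mp he
        subst hv
        have : D₁ = D₂ := by
          have := congrArg (fun T => Finset.erase T s(o, v₁)) heq'
          simpa [Finset.erase_insert hne₁, Finset.erase_insert hne₂] using this
        simp [this]
      · exact absurd (Sym2.mem_mk_left o v₁) (fun h => (hav₂ _ he).1 h)
    · -- surjective
      intro D hD
      rw [Finset.mem_filter] at hD
      obtain ⟨hDm, hno⟩ := hD
      push_neg at hno
      obtain ⟨e, he, hoe⟩ := hno
      set v := Sym2.Mem.other hoe with hv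
      have hespec : s(o, v) = e := Sym2.other_spec hoe
      rw [mem_matchingsOn_iff] at hDm
      have hadj : G.Adj o v := (SimpleGraph.mem_edgeSet G).mp (hespec ▸ hDm.2.1 e he)
      have hvS : v ∈ S.erase o :=
        Finset.mem_erase.mpr ⟨hadj.ne', hDm.1 e he v (hespec ▸ Sym2.mem_mk_right o v)⟩
      have hDe : D.erase e ∈ matchingsOn G S := by
        rw [mem_matchingsOn_iff]
        exact ⟨fun f hf => hDm.1 f (Finset.mem_of_mem_erase hf),
          fun f hf => hDm.2.1 f (Finset.mem_of_mem_erase hf),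
          hDm.2.2.mono (by simp [Set.subset_def]; tauto)⟩
      have hdisj : ∀ f ∈ D.erase e, ∀ y, y ∈ e → y ∉ f := by
        intro f hf
        exact hDm.2.2 (by simpa using he) (by simpa using Finset.mem_of_mem_erase hf)
          (Ne.symm (Finset.ne_of_mem_erase hf))
      have hx : (⟨v, D.erase e⟩ : Σ _ : V, Finset (Sym2 V)) ∈
          ((S.erase o).filter (G.Adj o)).sigma
            (fun v => matchingsOn G ((S.erase o).erase v)) := by
        rw [Finset.mem_sigma, Finset.mem_filter]
        refine ⟨⟨hvS, hadj⟩, ?_⟩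
        refine mem_matchingsOn_erase (mem_matchingsOn_erase hDe ?_) ?_
        · intro f hf; exact hdisj f hf o (hespec ▸ Sym2.mem_mk_left o v)
        · intro f hf; exact hdisj f hf v (hespec ▸ Sym2.mem_mk_right o v)
      exact ⟨⟨v, D.erase e⟩, hx, by simp [hespec, Finset.insert_erase he]⟩
    · -- values match
      rintro ⟨v, D'⟩ hx
      rw [Finset.mem_sigma, Finset.mem_filter] at hx
      have hav := key v D' (Finset.mem_filter.mpr hx.1) hx.2
      have hne : s(o, v) ∉ D' := fun h => (hav _ h).1 (Sym2.mem_mk_left o v)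
      have hcard2 : ((S.erase o).erase v).card + 1 = (S.erase o).card :=
        Finset.card_erase_add_one hx.1.1
      dsimp only
      rw [Finset.card_insert_of_notMem hne]
      congr 1
      omega

lemma Zc_empty (z : ℂ) : Zc G (∅ : Finset V) z = 1 := by
  have : matchingsOn G (∅ : Finset V) = {∅} := by
    ext D
    simp only [mem_matchingsOn_iff, Finset.mem_singleton]
    constructor
    · rintro ⟨h1, -, -⟩
      refine Finset.eq_empty_of_forall_notMem fun e he => ?_
      induction e using Sym2.ind with
      | _ a b => exact absurd (h1 _ he a (by simp)) (Finset.notMem_empty a)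
    · rintro rfl
      exact ⟨by simp, by simp, by simp⟩
  simp [Zc, this]

lemma main_ind {G : SimpleGraph V} (z : ℂ) (hz : 0 < z.re) :
    ∀ n (S : Finset V), S.card = n →
      Zc G S z ≠ 0 ∧ ∀ o ∈ S, 0 < (Zc G (S.erase o) z / Zc G S z).re := by
  intro n
  induction n using Nat.strong_induction_on with
  | _ n ih =>
  intro S hS
  -- the key claim for each o ∈ S
  have key : ∀ o ∈ S, Zc G S z ≠ 0 ∧ 0 < (Zc G (S.erase o) z / Zc G S z).re := by
    intro o ho
    have hcard : (S.erase o).card + 1 = S.card := Finset.card_erase_add_one ho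
    have ih' := ih (S.erase o).card (by omega) (S.erase o) rfl
    obtain ⟨hZ', hpos'⟩ := ih'
    set w : ℂ := z + ∑ v ∈ (S.erase o).filter (G.Adj o),
      Zc G ((S.erase o).erase v) z / Zc G (S.erase o) z with hw
    have hrec : Zc G S z = Zc G (S.erase o) z * w := by
      rw [Zc_recursion z ho, hw, mul_add, Finset.mul_sum]
      congr 1
      · ring
      · refine Finset.sum_congr rfl fun v hv => ?_
        field_simp
    have hwre : 0 < w.re := by
      rw [hw, Complex.add_re]
      have hsum : 0 ≤ (∑ v ∈ (S.erase o).filter (G.Adj o),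
          Zc G ((S.erase o).erase v) z / Zc G (S.erase o) z).re := by
        rw [Complex.re_sum]
        refine Finset.sum_nonneg fun v hv => ?_
        exact le_of_lt (hpos' v (Finset.mem_of_mem_filter v hv))
      linarith
    have hwne : w ≠ 0 := fun h => by simp [h] at hwre
    have hZS : Zc G S z ≠ 0 := by
      rw [hrec]; exact mul_ne_zero hZ' hwne
    refine ⟨hZS, ?_⟩
    have : Zc G (S.erase o) z / Zc G S z = w⁻¹ := by
      rw [hrec]
      field_simp
    rw [this, Complex.inv_re]
    exact div_pos hwre (Complex.normSq_pos.mpr hwne)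
  rcases Finset.eq_empty_or_nonempty S with rfl | ⟨o, ho⟩
  · refine ⟨by rw [Zc_empty]; exact one_ne_zero, fun o ho => absurd ho (by simp)⟩
  · exact ⟨(key o ho).1, fun o' ho' => (key o' ho').2⟩

end Helpers

/-- for `Re z > 0`, `z⁻¹ · R_z(G,o)` has strictly positive real part,
where `R_z(G,o) = z · Z_{G−o}(z)/Z_G(z)`; in particular `Z_G(z) ≠ 0`. -/
theorem stmt_3 {V : Type*} [Fintype V] [DecidableEq V] (G : SimpleGraph V) (o : V)
    (z : ℂ) (hz : 0 < z.re) :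
    0 < (z⁻¹ * (z * Zc G (Finset.univ.erase o) z / Zc G Finset.univ z)).re ∧
      Zc G Finset.univ z ≠ 0 := by
  obtain ⟨hne, hpos⟩ := main_ind (G := G) z hz (Finset.univ.card) Finset.univ rfl
  have hzne : z ≠ 0 := fun h => by simp [h] at hz
  have hsimp : z⁻¹ * (z * Zc G (Finset.univ.erase o) z / Zc G Finset.univ z)
      = Zc G (Finset.univ.erase o) z / Zc G Finset.univ z := by
    field_simp
  rw [hsimp]
  exact ⟨hpos o (Finset.mem_univ o), hne⟩
end

section
/- Let G be a finite graph, o a vertex, and r ∈ ℕ. If the ball [G,o]_{2r} of radius 2r around o is a tree, then R_x(G,o) ≤ R_x([G,o]_{2r}, o) for all x > 0; if [G,o]_{2r+1} is a tree, then R_x(G,o) ≥ R_x([G,o]_{2r+1}, o). -/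
open Finset
open scoped Classical

/-- Monomer-dimer partition function `Z_G(x) = Σ_D x^(|S| - 2|D|)`. -/
noncomputable def Zmd {V : Type*} (G : SimpleGraph V) (S : Finset V) (x : ℝ) : ℝ :=
  ∑ D ∈ matchingsOn G S, x ^ (S.card - 2 * D.card)

/-- `R_x(G,o) = x·Z_{G−o}(x)/Z_G(x)`, the monomer probability at `o`
(model restricted to the vertex set `S`). -/
noncomputable def Rmd {V : Type*} (G : SimpleGraph V) (S : Finset V) (o : V) (x : ℝ) : ℝ :=
  x * Zmd G (S.erase o) x / Zmd G S x

/-- The ball of center `o` and radius `r` in `G`, as a finset of vertices. -/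
noncomputable def ballF {V : Type*} [Fintype V] (G : SimpleGraph V) (o : V) (r : ℕ) :
    Finset V :=
  Finset.univ.filter fun u => G.Reachable o u ∧ G.dist o u ≤ r

section MD

variable {V : Type*} {G : SimpleGraph V} {S T : Finset V} {x : ℝ}

lemma mem_matchingsOn {D : Finset (Sym2 V)} :
    D ∈ matchingsOn G S ↔ D ⊆ S.sym2 ∧ (∀ e ∈ D, e ∈ G.edgeSet) ∧
      (D : Set (Sym2 V)).Pairwise fun e f => ∀ v, v ∈ e → v ∉ f := by
  simp [matchingsOn, and_assoc]

lemma empty_mem_matchingsOn : ∅ ∈ matchingsOn G S := by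
  simp [mem_matchingsOn]

lemma matching_edge {D : Finset (Sym2 V)} (hD : D ∈ matchingsOn G S) {a b : V}
    (hab : s(a, b) ∈ D) : G.Adj a b ∧ a ∈ S ∧ b ∈ S := by
  rw [mem_matchingsOn] at hD
  refine ⟨G.mem_edgeSet.mp (hD.2.1 _ hab), ?_, ?_⟩ <;>
  · have := hD.1 hab
    rw [Finset.mk_mem_sym2_iff] at this
    tauto

lemma matching_erase {D : Finset (Sym2 V)} (hD : D ∈ matchingsOn G S) {a b : V}
    (hab : s(a, b) ∈ D) : D.erase s(a, b) ∈ matchingsOn G ((S.erase a).erase b) := by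
  rw [mem_matchingsOn] at hD ⊢
  refine ⟨?_, fun e he => hD.2.1 e (Finset.erase_subset _ _ he), ?_⟩
  · intro e he
    have heD := Finset.erase_subset _ _ he
    have hne : e ≠ s(a, b) := Finset.ne_of_mem_erase he
    have hpair := hD.2.2 (Finset.mem_coe.mpr hab) (Finset.mem_coe.mpr heD) (Ne.symm hne)
    rw [Finset.mem_sym2_iff]
    intro y hy
    have hyS : y ∈ S := Finset.mem_sym2_iff.mp (hD.1 heD) y hy
    have hya : y ≠ a := fun h => hpair a (by simp) (h ▸ hy)
    have hyb : y ≠ b := fun h => hpair b (by simp) (h ▸ hy)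
    simp [Finset.mem_erase, hya, hyb, hyS]
  · exact Set.Pairwise.mono (by simpa using Finset.erase_subset _ _) hD.2.2

lemma matching_card_le {D : Finset (Sym2 V)} (hD : D ∈ matchingsOn G S) :
    2 * D.card ≤ S.card := by
  classical
  suffices h : ∀ n (S : Finset V) (D : Finset (Sym2 V)), D.card = n →
      D ∈ matchingsOn G S → 2 * D.card ≤ S.card from h _ S D rfl hD
  clear hD
  intro n
  induction n using Nat.strong_induction_on with
  | _ n ih =>
    intro S D hn hD
    rcases Finset.eq_empty_or_nonempty D with rfl | ⟨e, he⟩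
    · simp
    · induction e using Sym2.ind with
    | _ a b =>
      obtain ⟨hadj, haS, hbS⟩ := matching_edge hD he
      have hne : a ≠ b := hadj.ne
      have hbS' : b ∈ S.erase a := Finset.mem_erase.mpr ⟨hne.symm, hbS⟩
      have hcard : ((S.erase a).erase b).card = S.card - 2 := by
        rw [Finset.card_erase_of_mem hbS', Finset.card_erase_of_mem haS]
        omega
      have hS2 : 2 ≤ S.card := by
        have h1 : 1 ≤ (S.erase a).card := Finset.card_pos.mpr ⟨b, hbS'⟩
        have := Finset.card_erase_of_mem haS
        omega
      have hDe : (D.erase s(a, b)).card = n - 1 := by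
        rw [Finset.card_erase_of_mem he, hn]
      have hD1 : 1 ≤ n := by
        rw [← hn]; exact Finset.card_pos.mpr ⟨_, he⟩
      have h := ih (n - 1) (by omega) _ _ hDe (matching_erase hD he)
      rw [hcard] at h
      omega

lemma Zmd_pos (hx : 0 < x) : 0 < Zmd G S x :=
  Finset.sum_pos' (fun D _ => le_of_lt (pow_pos hx _))
    ⟨∅, empty_mem_matchingsOn, pow_pos hx _⟩

lemma Zmd_empty : Zmd G (∅ : Finset V) x = 1 := by
  have h : matchingsOn G (∅ : Finset V) = {∅} := by
    ext D
    simp only [mem_matchingsOn, Finset.sym2_empty, Finset.subset_empty, Finset.mem_singleton]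
    constructor
    · tauto
    · rintro rfl; simp
  simp [Zmd, h]

lemma Zmd_singleton {o : V} : Zmd G ({o} : Finset V) x = x := by
  have h : matchingsOn G ({o} : Finset V) = {∅} := by
    ext D
    simp only [mem_matchingsOn, Finset.mem_singleton]
    constructor
    · rintro ⟨hsub, hedge, -⟩
      refine Finset.eq_empty_iff_forall_notMem.mpr fun e he => ?_
      induction e using Sym2.ind with
      | _ a b =>
        have := hsub he
        rw [Finset.mk_mem_sym2_iff] at this
        obtain ⟨rfl, rfl⟩ : a = o ∧ b = o := by simpa using this
        exact G.loopless.irrefl _ (G.mem_edgeSet.mp (hedge _ he))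
    · rintro rfl; simp
  simp [Zmd, h]

/-- The recursion for the partition function. -/
lemma Zmd_rec {o : V} (ho : o ∈ S) :
    Zmd G S x = x * Zmd G (S.erase o) x +
      ∑ v ∈ (S.erase o).filter (G.Adj o), Zmd G ((S.erase o).erase v) x := by
  classical
  have hsplit := Finset.sum_filter_add_sum_filter_not (matchingsOn G S)
    (fun D => ∀ e ∈ D, o ∉ e) (fun D => x ^ (S.card - 2 * D.card))
  rw [Zmd, ← hsplit]
  congr 1
  · -- matchings avoiding o
    have hset : (matchingsOn G S).filter (fun D => ∀ e ∈ D, o ∉ e)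
        = matchingsOn G (S.erase o) := by
      ext D
      simp only [Finset.mem_filter, mem_matchingsOn]
      constructor
      · rintro ⟨⟨hsub, hedge, hpair⟩, havoid⟩
        refine ⟨fun e he => ?_, hedge, hpair⟩
        rw [Finset.mem_sym2_iff]
        intro y hy
        exact Finset.mem_erase.mpr ⟨fun h => havoid e he (h ▸ hy),
          Finset.mem_sym2_iff.mp (hsub he) y hy⟩
      · rintro ⟨hsub, hedge, hpair⟩
        refine ⟨⟨hsub.trans (Finset.sym2_mono (Finset.erase_subset _ _)), hedge, hpair⟩,
          fun e he hoe => ?_⟩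
        have := Finset.mem_sym2_iff.mp (hsub he) o hoe
        exact (Finset.mem_erase.mp this).1 rfl
    rw [hset, Zmd, Finset.mul_sum]
    refine Finset.sum_congr rfl fun D hD => ?_
    have hcard : 2 * D.card ≤ (S.erase o).card := matching_card_le hD
    have hScard : S.card = (S.erase o).card + 1 := by
      rw [Finset.card_erase_of_mem ho]
      have : 1 ≤ S.card := Finset.card_pos.mpr ⟨o, ho⟩
      omega
    have : S.card - 2 * D.card = ((S.erase o).card - 2 * D.card) + 1 := by omega
    rw [this, pow_succ]
    ring
  · -- matchings covering o
    have hset : (matchingsOn G S).filter (fun D => ¬ ∀ e ∈ D, o ∉ e)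
        = ((S.erase o).filter (G.Adj o)).biUnion
          (fun v => (matchingsOn G S).filter (fun D => s(o, v) ∈ D)) := by
      ext D
      simp only [Finset.mem_filter, Finset.mem_biUnion]
      constructor
      · rintro ⟨hD, hcov⟩
        push_neg at hcov
        obtain ⟨e, he, hoe⟩ := hcov
        obtain ⟨v, rfl⟩ := Sym2.mem_iff_exists.mp hoe
        obtain ⟨hadj, -, hvS⟩ := matching_edge hD he
        exact ⟨v, ⟨Finset.mem_erase.mpr ⟨hadj.ne', hvS⟩, hadj⟩, hD, he⟩
      · rintro ⟨v, -, hD, he⟩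
        refine ⟨hD, fun h => h _ he (by simp)⟩
    rw [hset, Finset.sum_biUnion]
    · refine Finset.sum_congr rfl fun v hv => ?_
      obtain ⟨hv', hadj⟩ := Finset.mem_filter.mp hv
      obtain ⟨hvo, hvS⟩ := Finset.mem_erase.mp hv'
      rw [Zmd]
      refine Finset.sum_bij' (fun D _ => D.erase s(o, v)) (fun D _ => insert s(o, v) D)
        ?_ ?_ ?_ ?_ ?_
      · intro D hD
        obtain ⟨hD, he⟩ := Finset.mem_filter.mp hD
        exact matching_erase hD he
      · intro D hD
        rw [mem_matchingsOn] at hD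
        obtain ⟨hsub, hedge, hpair⟩ := hD
        have hov : s(o, v) ∉ D := fun h => by
          have := Finset.mem_sym2_iff.mp (hsub h) o (by simp)
          exact (Finset.mem_erase.mp (Finset.mem_erase.mp this).2).1 rfl
        refine Finset.mem_filter.mpr ⟨mem_matchingsOn.mpr ⟨?_, ?_, ?_⟩, Finset.mem_insert_self _ _⟩
        · intro e he
          rcases Finset.mem_insert.mp he with rfl | he
          · rw [Finset.mk_mem_sym2_iff]; exact ⟨ho, hvS⟩
          · exact Finset.sym2_mono
              ((Finset.erase_subset _ _).trans (Finset.erase_subset _ _)) (hsub he)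
        · intro e he
          rcases Finset.mem_insert.mp he with rfl | he
          · exact G.mem_edgeSet.mpr hadj
          · exact hedge e he
        · rw [Finset.coe_insert]
          rw [Set.pairwise_insert]
          refine ⟨hpair, fun f hf hne => ?_⟩
          have hfmem : ∀ y ∈ f, y ∈ (S.erase o).erase v :=
            Finset.mem_sym2_iff.mp (hsub hf)
          constructor
          · intro y hy hyf
            have := hfmem y hyf
            rcases Sym2.mem_iff.mp hy with rfl | rfl
            · exact (Finset.mem_erase.mp (Finset.mem_erase.mp this).2).1 rfl
            · exact (Finset.mem_erase.mp this).1 rfl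
          · intro y hy hyov
            have := hfmem y hy
            rcases Sym2.mem_iff.mp hyov with rfl | rfl
            · exact (Finset.mem_erase.mp (Finset.mem_erase.mp this).2).1 rfl
            · exact (Finset.mem_erase.mp this).1 rfl
      · intro D hD
        exact Finset.insert_erase (Finset.mem_filter.mp hD).2
      · intro D hD
        refine Finset.erase_insert ?_
        rw [mem_matchingsOn] at hD
        intro h
        have := Finset.mem_sym2_iff.mp (hD.1 h) o (by simp)
        exact (Finset.mem_erase.mp (Finset.mem_erase.mp this).2).1 rfl
      · intro D hD
        obtain ⟨hD', he⟩ := Finset.mem_filter.mp hD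
        have h2 : 2 * D.card ≤ S.card := matching_card_le hD'
        have h1 : 1 ≤ D.card := Finset.card_pos.mpr ⟨_, he⟩
        have hvS' : v ∈ S.erase o := Finset.mem_erase.mpr ⟨hvo, hvS⟩
        have hcarde : ((S.erase o).erase v).card = S.card - 2 := by
          rw [Finset.card_erase_of_mem hvS', Finset.card_erase_of_mem ho]
          omega
        have hDe : (D.erase s(o, v)).card = D.card - 1 := Finset.card_erase_of_mem he
        congr 1
        rw [hcarde, hDe]
        omega
    · intro a ha b hb hab
      simp only [Function.onFun]
      rw [Finset.disjoint_left]
      intro D hDa hDb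
      obtain ⟨hDm, hea⟩ := Finset.mem_filter.mp hDa
      obtain ⟨-, heb⟩ := Finset.mem_filter.mp hDb
      rw [mem_matchingsOn] at hDm
      have hne : s(o, a) ≠ s(o, b) := fun h => hab (Sym2.congr_right.mp h)
      exact hDm.2.2 (Finset.mem_coe.mpr hea) (Finset.mem_coe.mpr heb) hne o (by simp) (by simp)

lemma Rmd_nonneg (hx : 0 < x) {o : V} : 0 ≤ Rmd G S o x :=
  div_nonneg (mul_nonneg hx.le (Zmd_pos hx).le) (Zmd_pos hx).le

lemma Rmd_le_one (hx : 0 < x) {o : V} (ho : o ∈ S) : Rmd G S o x ≤ 1 := by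
  rw [Rmd, div_le_one (Zmd_pos hx), Zmd_rec ho]
  have : 0 ≤ ∑ v ∈ (S.erase o).filter (G.Adj o), Zmd G ((S.erase o).erase v) x :=
    Finset.sum_nonneg fun v _ => (Zmd_pos hx).le
  linarith

lemma Rmd_singleton (hx : 0 < x) {o : V} : Rmd G ({o} : Finset V) o x = 1 := by
  rw [Rmd, Finset.erase_singleton, Zmd_empty, Zmd_singleton]
  field_simp

/-- The recursion for the monomer probability. -/
lemma Rmd_rec (hx : 0 < x) {o : V} (ho : o ∈ S) :
    Rmd G S o x = x ^ 2 /
      (x ^ 2 + ∑ v ∈ (S.erase o).filter (G.Adj o), Rmd G (S.erase o) v x) := by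
  have hZ' : 0 < Zmd G (S.erase o) x := Zmd_pos hx
  have hsum : ∑ v ∈ (S.erase o).filter (G.Adj o), Rmd G (S.erase o) v x
      = (∑ v ∈ (S.erase o).filter (G.Adj o), x * Zmd G ((S.erase o).erase v) x)
        / Zmd G (S.erase o) x := by
    rw [Finset.sum_div]; rfl
  have hsum2 : 0 ≤ ∑ v ∈ (S.erase o).filter (G.Adj o), Zmd G ((S.erase o).erase v) x :=
    Finset.sum_nonneg fun v _ => (Zmd_pos hx).le
  rw [Rmd, Zmd_rec ho, hsum, ← Finset.mul_sum]
  have hden : (0:ℝ) < x * Zmd G (S.erase o) x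
      + ∑ v ∈ (S.erase o).filter (G.Adj o), Zmd G ((S.erase o).erase v) x :=
    add_pos_of_pos_of_nonneg (mul_pos hx hZ') hsum2
  have hden2 : (0:ℝ) < x ^ 2
      + x * (∑ v ∈ (S.erase o).filter (G.Adj o), Zmd G ((S.erase o).erase v) x)
        / Zmd G (S.erase o) x := by
    have : 0 ≤ x * (∑ v ∈ (S.erase o).filter (G.Adj o), Zmd G ((S.erase o).erase v) x)
        / Zmd G (S.erase o) x := div_nonneg (mul_nonneg hx.le hsum2) hZ'.le
    nlinarith [pow_pos hx 2]
  field_simp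

/-- The graph `G` restricted to vertex set `S` (as a graph on `V`). -/
def GI (G : SimpleGraph V) (S : Finset V) : SimpleGraph V where
  Adj a b := G.Adj a b ∧ a ∈ S ∧ b ∈ S
  symm := ⟨fun a b ⟨h, ha, hb⟩ => ⟨h.symm, hb, ha⟩⟩
  loopless := ⟨fun a h => G.loopless.irrefl a h.1⟩

lemma GI_adj {a b : V} : (GI G S).Adj a b ↔ G.Adj a b ∧ a ∈ S ∧ b ∈ S := Iff.rfl

lemma GI_le (h : S ⊆ T) : GI G S ≤ GI G T :=
  fun _ _ ⟨ha, hx, hy⟩ => ⟨ha, h hx, h hy⟩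

lemma GI_le_self : GI G S ≤ G := fun _ _ h => h.1

lemma GI_univ [Fintype V] : GI G Finset.univ = G := by
  ext a b; simp [GI_adj]

lemma walk_support_mem {a b : V} (w : (GI G T).Walk a b) (ha : a ∈ T) :
    ∀ s ∈ w.support, s ∈ T := by
  induction w with
  | nil => intro s hs; rw [SimpleGraph.Walk.support_nil, List.mem_singleton] at hs; exact hs ▸ ha
  | cons h p ih =>
    intro s hs
    rw [SimpleGraph.Walk.support_cons] at hs
    rcases List.mem_cons.mp hs with rfl | hs
    · exact ha
    · exact ih h.2.2 s hs

lemma walk_end_mem {a b : V} (w : (GI G T).Walk a b) (ha : a ∈ T) : b ∈ T :=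
  walk_support_mem w ha b w.end_mem_support

/-- The ball of radius `k` around `o` inside the vertex set `S`. -/
noncomputable def ballI (G : SimpleGraph V) (S : Finset V) (o : V) (k : ℕ) : Finset V :=
  S.filter fun u => (GI G S).Reachable o u ∧ (GI G S).dist o u ≤ k

lemma mem_ballI {o u : V} {k : ℕ} :
    u ∈ ballI G S o k ↔ u ∈ S ∧ (GI G S).Reachable o u ∧ (GI G S).dist o u ≤ k := by
  simp [ballI]

lemma ballI_subset {o : V} {k : ℕ} : ballI G S o k ⊆ S := Finset.filter_subset _ _

lemma self_mem_ballI {o : V} {k : ℕ} (ho : o ∈ S) : o ∈ ballI G S o k :=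
  mem_ballI.mpr ⟨ho, SimpleGraph.Reachable.refl o, by rw [SimpleGraph.dist_self]; omega⟩

lemma ballI_zero {o : V} (ho : o ∈ S) : ballI G S o 0 = {o} := by
  ext u
  simp only [mem_ballI, Finset.mem_singleton, Nat.le_zero]
  constructor
  · rintro ⟨-, hr, hd⟩
    exact (hr.dist_eq_zero_iff.mp hd).symm
  · rintro rfl
    exact ⟨ho, SimpleGraph.Reachable.refl u, by simp⟩

/-- The connected component of `v` inside vertex set `T`, as a finset. -/
noncomputable def compF (G : SimpleGraph V) (T : Finset V) (v : V) : Finset V :=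
  T.filter fun u => (GI G T).Reachable v u

lemma mem_compF {v u : V} : u ∈ compF G T v ↔ u ∈ T ∧ (GI G T).Reachable v u := by
  simp [compF]

lemma compF_subset {v : V} : compF G T v ⊆ T := Finset.filter_subset _ _

lemma self_mem_compF {v : V} (hv : v ∈ T) : v ∈ compF G T v :=
  mem_compF.mpr ⟨hv, SimpleGraph.Reachable.refl v⟩

lemma compF_erase_eq {v u : V} (hv : v ∈ T) (hu : u ∈ T.erase v) (hadj : G.Adj v u) :
    compF G (T.erase v) u = compF G ((compF G T v).erase v) u := by
  set C := compF G T v with hC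
  have hCT : C ⊆ T := compF_subset
  apply Finset.Subset.antisymm
  · intro w hw
    obtain ⟨hwT, hreach⟩ := mem_compF.mp hw
    obtain ⟨w1⟩ := hreach
    have hsupp : ∀ s ∈ w1.support, s ∈ C.erase v := by
      intro s hs
      have hsT : s ∈ T.erase v := walk_support_mem w1 hu s hs
      have hr : (GI G T).Reachable v s :=
        ⟨SimpleGraph.Walk.cons (GI_adj.mpr ⟨hadj, hv, (Finset.mem_erase.mp hu).2⟩)
          ((w1.takeUntil s hs).mapLe (GI_le (Finset.erase_subset _ _)))⟩
      exact Finset.mem_erase.mpr ⟨(Finset.mem_erase.mp hsT).1,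
        mem_compF.mpr ⟨(Finset.mem_erase.mp hsT).2, hr⟩⟩
    have hedges : ∀ e ∈ w1.edges, e ∈ (GI G (C.erase v)).edgeSet := by
      intro e he
      induction e using Sym2.ind with
      | _ a b =>
        have hadj' := w1.adj_of_mem_edges he
        exact (GI G (C.erase v)).mem_edgeSet.mpr (GI_adj.mpr ⟨hadj'.1,
          hsupp a (w1.fst_mem_support_of_mem_edges he),
          hsupp b (w1.snd_mem_support_of_mem_edges he)⟩)
    exact mem_compF.mpr ⟨hsupp w w1.end_mem_support, ⟨w1.transfer _ hedges⟩⟩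
  · intro w hw
    obtain ⟨hwC, hreach⟩ := mem_compF.mp hw
    have hsub : (C.erase v : Finset V) ⊆ T.erase v := Finset.erase_subset_erase _ hCT
    exact mem_compF.mpr ⟨hsub hwC, hreach.mono (GI_le hsub)⟩

/-- `R` only depends on the connected component of the root. -/
lemma Rmd_comp (hx : 0 < x) {v : V} (hv : v ∈ T) :
    Rmd G T v x = Rmd G (compF G T v) v x := by
  classical
  suffices h : ∀ n (T : Finset V) (v : V), T.card ≤ n → v ∈ T →
      Rmd G T v x = Rmd G (compF G T v) v x from h T.card T v le_rfl hv
  clear hv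
  intro n
  induction n with
  | zero =>
    intro T v hn hv
    exact absurd (Finset.card_pos.mpr ⟨v, hv⟩) (by omega)
  | succ n ih =>
    intro T v hn hv
    set C := compF G T v with hC
    have hCT : C ⊆ T := compF_subset
    have hvC : v ∈ C := self_mem_compF hv
    rw [Rmd_rec hx hv, Rmd_rec hx hvC]
    have hNeq : (C.erase v).filter (G.Adj v) = (T.erase v).filter (G.Adj v) := by
      ext u
      simp only [Finset.mem_filter, Finset.mem_erase]
      constructor
      · rintro ⟨⟨hne, huC⟩, hadj⟩
        exact ⟨⟨hne, hCT huC⟩, hadj⟩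
      · rintro ⟨⟨hne, huT⟩, hadj⟩
        refine ⟨⟨hne, mem_compF.mpr ⟨huT, ?_⟩⟩, hadj⟩
        exact (GI_adj.mpr ⟨hadj, hv, huT⟩).reachable
    rw [hNeq]
    congr 2
    refine Finset.sum_congr rfl fun u hu => ?_
    obtain ⟨hu', hadj⟩ := Finset.mem_filter.mp hu
    have huT : u ∈ T.erase v := hu'
    have huC : u ∈ C.erase v := by
      rw [Finset.mem_erase] at huT ⊢
      exact ⟨huT.1, mem_compF.mpr ⟨huT.2, (GI_adj.mpr ⟨hadj, hv, huT.2⟩).reachable⟩⟩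
    have h1 : (T.erase v).card ≤ n := by
      have := Finset.card_erase_of_mem hv
      have : (T.erase v).card = T.card - 1 := Finset.card_erase_of_mem hv
      have hTpos : 1 ≤ T.card := Finset.card_pos.mpr ⟨v, hv⟩
      omega
    have h2 : ((C.erase v) : Finset V).card ≤ n := by
      have hss : C.erase v ⊆ T.erase v := Finset.erase_subset_erase _ hCT
      exact le_trans (Finset.card_le_card hss) h1
    rw [ih _ _ h1 huT, ih _ _ h2 huC, compF_erase_eq hv huT hadj]
open SimpleGraph in
lemma support_mapLe' {G G' : SimpleGraph V} (h : G ≤ G') {a b : V} (p : G.Walk a b) :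
    (p.mapLe h).support = p.support := by
  rw [SimpleGraph.Walk.support_map]
  exact List.map_id' _

open SimpleGraph in
lemma length_mapLe' {G G' : SimpleGraph V} (h : G ≤ G') {a b : V} (p : G.Walk a b) :
    (p.mapLe h).length = p.length := by
  simp [SimpleGraph.Walk.mapLe, SimpleGraph.Walk.length_map]

open SimpleGraph in
lemma mapLe_injective' {G G' : SimpleGraph V} (h : G ≤ G') {a b : V} :
    Function.Injective (fun p : G.Walk a b => p.mapLe h) :=
  SimpleGraph.Walk.map_injective_of_injective (fun _ _ hh => hh) a b

set_option maxHeartbeats 1000000 in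
/-- The main alternating comparison lemma. -/
lemma main_ineq (hx : 0 < x) :
    ∀ (k : ℕ) (S : Finset V) (o : V), o ∈ S →
      (∀ (u : V) (p q : (GI G (ballI G S o k)).Path o u), p = q) →
      (Even k → Rmd G S o x ≤ Rmd G (ballI G S o k) o x) ∧
      (Odd k → Rmd G (ballI G S o k) o x ≤ Rmd G S o x) := by
  intro k
  induction k with
  | zero =>
    intro S o ho _
    refine ⟨fun _ => ?_, fun h => absurd h (by simp)⟩
    rw [ballI_zero ho, Rmd_singleton hx]
    exact Rmd_le_one hx ho
  | succ k ih =>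
    intro S o ho hU
    set B := ballI G S o (k + 1) with hB
    have hoB : o ∈ B := self_mem_ballI ho
    have hBS : B ⊆ S := ballI_subset
    have hBoSo : B.erase o ⊆ S.erase o := Finset.erase_subset_erase _ hBS
    have hN : (B.erase o).filter (G.Adj o) = (S.erase o).filter (G.Adj o) := by
      ext v
      simp only [Finset.mem_filter, Finset.mem_erase]
      constructor
      · rintro ⟨⟨hne, hvB⟩, hadj⟩; exact ⟨⟨hne, hBS hvB⟩, hadj⟩
      · rintro ⟨⟨hne, hvS⟩, hadj⟩
        refine ⟨⟨hne, mem_ballI.mpr ⟨hvS, (GI_adj.mpr ⟨hadj, ho, hvS⟩).reachable, ?_⟩⟩, hadj⟩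
        calc (GI G S).dist o v
            ≤ (SimpleGraph.Walk.cons (GI_adj.mpr ⟨hadj, ho, hvS⟩) SimpleGraph.Walk.nil).length :=
              SimpleGraph.dist_le _
          _ ≤ k + 1 := by simp
    have key : ∀ v ∈ (S.erase o).filter (G.Adj o),
        Rmd G (B.erase o) v x = Rmd G (ballI G (S.erase o) v k) v x ∧
        ((Even k → Rmd G (S.erase o) v x ≤ Rmd G (ballI G (S.erase o) v k) v x) ∧
         (Odd k → Rmd G (ballI G (S.erase o) v k) v x ≤ Rmd G (S.erase o) v x)) := by
      intro v hv
      obtain ⟨hv', hadj⟩ := Finset.mem_filter.mp hv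
      obtain ⟨hvo, hvS⟩ := Finset.mem_erase.mp hv'
      have hvB : v ∈ B := by
        rw [← hN] at hv
        exact Finset.mem_of_mem_erase (Finset.mem_filter.mp hv).1
      have hvBo : v ∈ B.erase o := Finset.mem_erase.mpr ⟨hvo, hvB⟩
      set A := ballI G (S.erase o) v k with hA
      have hvA : v ∈ A := self_mem_ballI hv'
      have hoA : o ∉ A := fun h => (Finset.mem_erase.mp (ballI_subset h)).1 rfl
      -- A ⊆ B.erase o
      have hAB : A ⊆ B.erase o := by
        intro u hu
        obtain ⟨huSo, hreach, hdist⟩ := mem_ballI.mp hu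
        obtain ⟨w, hwlen⟩ := hreach.exists_walk_length_eq_dist
        have hW : (GI G S).Reachable o u :=
          ⟨SimpleGraph.Walk.cons (GI_adj.mpr ⟨hadj, ho, hvS⟩)
            (w.mapLe (GI_le (Finset.erase_subset _ _)))⟩
        have hWd : (GI G S).dist o u ≤ k + 1 := by
          calc (GI G S).dist o u
              ≤ (SimpleGraph.Walk.cons (GI_adj.mpr ⟨hadj, ho, hvS⟩)
                  (w.mapLe (GI_le (Finset.erase_subset _ _)))).length := SimpleGraph.dist_le _
            _ = w.length + 1 := by
                rw [SimpleGraph.Walk.length_cons, length_mapLe']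
            _ ≤ k + 1 := by rw [hwlen]; omega
        exact Finset.mem_erase.mpr ⟨(Finset.mem_erase.mp huSo).1,
          mem_ballI.mpr ⟨(Finset.mem_erase.mp huSo).2, hW, hWd⟩⟩
      -- compF G (B.erase o) v = A
      have hcomp : compF G (B.erase o) v = A := by
        apply Finset.Subset.antisymm
        · intro u hu
          obtain ⟨huBo, hreach⟩ := mem_compF.mp hu
          obtain ⟨w1⟩ := hreach
          have p1 := w1.toPath
          have hp1supp : ∀ s ∈ (p1 : (GI G (B.erase o)).Walk v u).support, s ∈ B.erase o :=
            walk_support_mem _ hvBo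
          have hq : ((p1 : (GI G (B.erase o)).Walk v u).mapLe (GI_le (Finset.erase_subset _ _))
              : (GI G B).Walk v u).IsPath := SimpleGraph.Walk.IsPath.mapLe _ p1.2
          have hqo : o ∉ ((p1 : (GI G (B.erase o)).Walk v u).mapLe
              (GI_le (Finset.erase_subset _ _))).support := by
            rw [support_mapLe']
            intro hc
            exact (Finset.mem_erase.mp (hp1supp o hc)).1 rfl
          set q : (GI G B).Walk o u := SimpleGraph.Walk.cons (GI_adj.mpr ⟨hadj, hoB, hvB⟩)
            ((p1 : (GI G (B.erase o)).Walk v u).mapLe (GI_le (Finset.erase_subset _ _))) with hqdef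
          have hqpath : q.IsPath := by
            rw [hqdef, SimpleGraph.Walk.cons_isPath_iff]
            exact ⟨hq, hqo⟩
          -- a short path from o to u inside the ball
          have huB : u ∈ B := (Finset.mem_erase.mp huBo).2
          obtain ⟨huS, hreachS, hdistS⟩ := mem_ballI.mp huB
          obtain ⟨w0, hw0len⟩ := hreachS.exists_walk_length_eq_dist
          have hw0supp : ∀ s ∈ w0.support, s ∈ B := by
            intro s hs
            have hsS : s ∈ S := walk_support_mem w0 ho s hs
            refine mem_ballI.mpr ⟨hsS, ⟨w0.takeUntil s hs⟩, ?_⟩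
            calc (GI G S).dist o s ≤ (w0.takeUntil s hs).length := SimpleGraph.dist_le _
              _ ≤ w0.length := SimpleGraph.Walk.length_takeUntil_le _ _
              _ ≤ k + 1 := by rw [hw0len]; exact hdistS
          have hw0edges : ∀ e ∈ w0.edges, e ∈ (GI G B).edgeSet := by
            intro e he
            induction e using Sym2.ind with
            | _ a b =>
              have hadj' := w0.adj_of_mem_edges he
              exact (GI G B).mem_edgeSet.mpr (GI_adj.mpr ⟨hadj'.1,
                hw0supp a (w0.fst_mem_support_of_mem_edges he),
                hw0supp b (w0.snd_mem_support_of_mem_edges he)⟩)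
          set w0' := w0.transfer (GI G B) hw0edges with hw0'
          have hp0len : (w0'.toPath : (GI G B).Walk o u).length ≤ k + 1 := by
            calc (w0'.toPath : (GI G B).Walk o u).length ≤ w0'.length :=
                SimpleGraph.Walk.length_bypass_le _
              _ = w0.length := SimpleGraph.Walk.length_transfer _ _
              _ ≤ k + 1 := by rw [hw0len]; exact hdistS
          have hPQ := hU u w0'.toPath ⟨q, hqpath⟩
          have hqlen : q.length ≤ k + 1 := by
            rw [← show (w0'.toPath : (GI G B).Walk o u).length = q.length from
              congrArg (fun P : (GI G B).Path o u => (P : (GI G B).Walk o u).length) hPQ]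
            exact hp0len
          have hp1len : (p1 : (GI G (B.erase o)).Walk v u).length ≤ k := by
            rw [hqdef] at hqlen
            rw [SimpleGraph.Walk.length_cons, length_mapLe'] at hqlen
            omega
          refine mem_ballI.mpr ⟨hBoSo huBo, ⟨(p1 : (GI G (B.erase o)).Walk v u).mapLe (GI_le hBoSo)⟩, ?_⟩
          calc (GI G (S.erase o)).dist v u
              ≤ ((p1 : (GI G (B.erase o)).Walk v u).mapLe (GI_le hBoSo)).length :=
                SimpleGraph.dist_le _
            _ = (p1 : (GI G (B.erase o)).Walk v u).length := length_mapLe' _ _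
            _ ≤ k := hp1len
        · intro u hu
          obtain ⟨huSo, hreach, hdist⟩ := mem_ballI.mp hu
          obtain ⟨w, hwlen⟩ := hreach.exists_walk_length_eq_dist
          have hwsupp : ∀ s ∈ w.support, s ∈ A := by
            intro s hs
            have hsSo : s ∈ S.erase o := walk_support_mem w hv' s hs
            refine mem_ballI.mpr ⟨hsSo, ⟨w.takeUntil s hs⟩, ?_⟩
            calc (GI G (S.erase o)).dist v s ≤ (w.takeUntil s hs).length :=
                SimpleGraph.dist_le _
              _ ≤ w.length := SimpleGraph.Walk.length_takeUntil_le _ _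
              _ ≤ k := by rw [hwlen]; exact hdist
          have hwedges : ∀ e ∈ w.edges, e ∈ (GI G (B.erase o)).edgeSet := by
            intro e he
            induction e using Sym2.ind with
            | _ a b =>
              have hadj' := w.adj_of_mem_edges he
              exact (GI G (B.erase o)).mem_edgeSet.mpr (GI_adj.mpr ⟨hadj'.1,
                hAB (hwsupp a (w.fst_mem_support_of_mem_edges he)),
                hAB (hwsupp b (w.snd_mem_support_of_mem_edges he))⟩)
          exact mem_compF.mpr ⟨hAB hu, ⟨w.transfer _ hwedges⟩⟩
      -- path uniqueness inside A
      have hU' : ∀ (u : V) (p q : (GI G A).Path v u), p = q := by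
        intro u p q
        have hABfull : A ⊆ B := hAB.trans (Finset.erase_subset _ _)
        have hmkpath : ∀ pp : (GI G A).Path v u,
            (SimpleGraph.Walk.cons (GI_adj.mpr ⟨hadj, hoB, hvB⟩)
              ((pp : (GI G A).Walk v u).mapLe (GI_le hABfull))).IsPath := by
          intro pp
          rw [SimpleGraph.Walk.cons_isPath_iff]
          refine ⟨SimpleGraph.Walk.IsPath.mapLe _ pp.2, ?_⟩
          rw [support_mapLe']
          intro hc
          exact hoA (walk_support_mem _ hvA o hc)
        have h1 := hU u ⟨_, hmkpath p⟩ ⟨_, hmkpath q⟩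
        have h2 := Subtype.ext_iff.mp h1
        rw [SimpleGraph.Walk.cons.injEq] at h2
        exact Subtype.ext (mapLe_injective' (GI_le hABfull) (eq_of_heq h2.2))
      have hIH := ih (S.erase o) v hv' hU'
      exact ⟨by rw [Rmd_comp hx hvBo, hcomp], hIH⟩
    -- assemble
    have hrecS := Rmd_rec (G := G) (x := x) hx ho
    have hrecB := Rmd_rec (G := G) (x := x) hx hoB
    rw [hN] at hrecB
    have hsum_nonnegS : (0:ℝ) ≤ ∑ v ∈ (S.erase o).filter (G.Adj o), Rmd G (S.erase o) v x :=
      Finset.sum_nonneg fun v _ => Rmd_nonneg hx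
    have hsum_nonnegB : (0:ℝ) ≤ ∑ v ∈ (S.erase o).filter (G.Adj o), Rmd G (B.erase o) v x :=
      Finset.sum_nonneg fun v _ => Rmd_nonneg hx
    constructor
    · intro hev
      have hodd : Odd k := by
        rw [Nat.even_add_one] at hev
        exact Nat.not_even_iff_odd.mp hev
      have hsum : ∑ v ∈ (S.erase o).filter (G.Adj o), Rmd G (B.erase o) v x
          ≤ ∑ v ∈ (S.erase o).filter (G.Adj o), Rmd G (S.erase o) v x := by
        refine Finset.sum_le_sum fun v hv => ?_
        obtain ⟨heq, _, hge⟩ := key v hv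
        rw [heq]
        exact hge hodd
      rw [hrecS, hrecB]
      have hposB : (0:ℝ) < x ^ 2 + ∑ v ∈ (S.erase o).filter (G.Adj o), Rmd G (B.erase o) v x := by
        have := pow_pos hx 2
        linarith
      exact div_le_div_of_nonneg_left (pow_pos hx 2).le hposB (by linarith)
    · intro hoddk
      have hevk : Even k := by
        rw [Nat.odd_add_one] at hoddk
        exact Nat.not_odd_iff_even.mp hoddk
      have hsum : ∑ v ∈ (S.erase o).filter (G.Adj o), Rmd G (S.erase o) v x
          ≤ ∑ v ∈ (S.erase o).filter (G.Adj o), Rmd G (B.erase o) v x := by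
        refine Finset.sum_le_sum fun v hv => ?_
        obtain ⟨heq, hle, -⟩ := key v hv
        rw [heq]
        exact hle hevk
      rw [hrecS, hrecB]
      have hposS : (0:ℝ) < x ^ 2 + ∑ v ∈ (S.erase o).filter (G.Adj o), Rmd G (S.erase o) v x := by
        have := pow_pos hx 2
        linarith
      exact div_le_div_of_nonneg_left (pow_pos hx 2).le hposS (by linarith)
/-- Inclusion homomorphism from the induced subgraph on `↑S` to `GI G S`. -/
def iotaHom (G : SimpleGraph V) (S : Finset V) : G.induce (S : Set V) →g GI G S where
  toFun := Subtype.val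
  map_rel' := fun {a b} h => ⟨h, Finset.mem_coe.mp a.2, Finset.mem_coe.mp b.2⟩

/-- Lift a walk in `GI G S` to a walk in the induced subgraph on `↑S`. -/
def liftWalk {S : Finset V} : {a b : V} → (GI G S).Walk a b →
    ∀ (ha : a ∈ (S : Set V)) (hb : b ∈ (S : Set V)),
      (G.induce (S : Set V)).Walk ⟨a, ha⟩ ⟨b, hb⟩
  | _, _, SimpleGraph.Walk.nil, _, _ => SimpleGraph.Walk.nil
  | _, _, SimpleGraph.Walk.cons h p, ha, hb =>
      SimpleGraph.Walk.cons (by exact h.1) (liftWalk p (Finset.mem_coe.mpr h.2.2) hb)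

lemma liftWalk_map {S : Finset V} {a b : V} (w : (GI G S).Walk a b)
    (ha : a ∈ (S : Set V)) (hb : b ∈ (S : Set V)) :
    (liftWalk w ha hb).map (iotaHom G S) = w := by
  induction w with
  | nil => rfl
  | cons h p ih => exact congrArg (SimpleGraph.Walk.cons h) (ih _ hb)

lemma uniq_of_tree {B : Finset V} {o : V} (ho : o ∈ B)
    (hT : (G.induce (B : Set V)).IsTree) :
    ∀ (u : V) (p q : (GI G B).Path o u), p = q := by
  intro u p q
  have hu : u ∈ B := walk_end_mem p.val ho
  have hP : (liftWalk (p : (GI G B).Walk o u) (Finset.mem_coe.mpr ho)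
      (Finset.mem_coe.mpr hu)).IsPath := by
    apply SimpleGraph.Walk.IsPath.of_map (f := iotaHom G B)
    rw [liftWalk_map]; exact p.2
  have hQ : (liftWalk (q : (GI G B).Walk o u) (Finset.mem_coe.mpr ho)
      (Finset.mem_coe.mpr hu)).IsPath := by
    apply SimpleGraph.Walk.IsPath.of_map (f := iotaHom G B)
    rw [liftWalk_map]; exact q.2
  have huniq := hT.IsAcyclic.path_unique ⟨_, hP⟩ ⟨_, hQ⟩
  have h2 := congrArg
    (fun P : (G.induce (B : Set V)).Path ⟨o, Finset.mem_coe.mpr ho⟩ ⟨u, Finset.mem_coe.mpr hu⟩ =>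
      P.val.map (iotaHom G B)) huniq
  simp only at h2
  rw [liftWalk_map, liftWalk_map] at h2
  exact Subtype.ext h2

end MD







/-- correlation inequalities on a locally tree-like graph: if the ball
`[G,o]_{2r}` is a tree then `R_x(G,o) ≤ R_x([G,o]_{2r},o)`; if `[G,o]_{2r+1}` is a
tree then `R_x(G,o) ≥ R_x([G,o]_{2r+1},o)`. -/
theorem stmt_5 {V : Type*} [Fintype V] [DecidableEq V] (G : SimpleGraph V) (o : V)
    (r : ℕ) (x : ℝ) (hx : 0 < x) :
    ((G.induce (ballF G o (2 * r) : Set V)).IsTree →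
        Rmd G Finset.univ o x ≤ Rmd G (ballF G o (2 * r)) o x) ∧
      ((G.induce (ballF G o (2 * r + 1) : Set V)).IsTree →
        Rmd G (ballF G o (2 * r + 1)) o x ≤ Rmd G Finset.univ o x) := by
  have hball : ∀ k : ℕ, ballI G Finset.univ o k = ballF G o k := by
    intro k
    ext u
    simp only [mem_ballI, ballF, Finset.mem_filter, Finset.mem_univ, true_and, GI_univ]
  have hoball : ∀ k : ℕ, o ∈ ballF G o k := by
    intro k
    simp only [ballF, Finset.mem_filter, Finset.mem_univ, true_and, SimpleGraph.dist_self]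
    exact ⟨SimpleGraph.Reachable.refl o, Nat.zero_le k⟩
  constructor
  · intro hT
    have hU := uniq_of_tree (hoball (2 * r)) hT
    have h := (main_ineq hx (2 * r) Finset.univ o (Finset.mem_univ o)
      (by rw [hball]; exact hU)).1 (even_two_mul r)
    rwa [hball] at h
  · intro hT
    have hU := uniq_of_tree (hoball (2 * r + 1)) hT
    have h := (main_ineq hx (2 * r + 1) Finset.univ o (Finset.mem_univ o)
      (by rw [hball]; exact hU)).2 (odd_two_mul_add_one r)
    rwa [hball] at h
end
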